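/- arXiv:0708.1556 — 2 statements merged into one kernel-verified Lean document; each statement's English description precedes it below -/
import Mathlib

section
/- (Differentiation under the integral sign) Let E be a sequentially complete Hausdorff real locally convex topological vector space, let I = [0,1], and let Γ : I → E^I be such that: (i) Γ is continuous from I into E^I with the product (pointwise convergence) topology; (ii) for every (s,t) ∈ I × I the curve Γ(s) : I → E is differentiable at t to a unique element g(s,t) ∈ E; and (iii) the map g : I × I → E is continuous. Define c : I → E by letting c(t) be the Riemann integral over s ∈ [0,1] of Γ(s)(t) (which exists). Then for every t ∈ I, the curve c is differentiable at t to the Riemann integral over s ∈ [0,1] of g(s,t); in particular c is a standard differentiable curve in E. -/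
open Set Filter Topology

/-- The Kelleyfication of a topology `T`: a set is open iff its trace on every `T`-compact
set agrees with the trace of some `T`-open set. -/
def Kelley {X : Type*} (T : TopologicalSpace X) : TopologicalSpace X where
  IsOpen U := ∀ K : Set X, @IsCompact X T K → ∃ V : Set X, T.IsOpen V ∧ U ∩ K = V ∩ K
  isOpen_univ K _ := ⟨univ, T.isOpen_univ, rfl⟩
  isOpen_inter := by
    intro s t hs ht K hK
    obtain ⟨Vs, hVs, hsK⟩ := hs K hK
    obtain ⟨Vt, hVt, htK⟩ := ht K hK
    refine ⟨Vs ∩ Vt, T.isOpen_inter _ _ hVs hVt, ?_⟩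
    ext x
    have h1 := Set.ext_iff.mp hsK x
    have h2 := Set.ext_iff.mp htK x
    simp only [Set.mem_inter_iff] at *
    tauto
  isOpen_sUnion := by
    intro S hS K hK
    choose! V hV1 hV2 using fun t (ht : t ∈ S) => hS t ht K hK
    refine ⟨⋃ t ∈ S, V t, ?_, ?_⟩
    · letI := T
      exact isOpen_biUnion fun t ht => hV1 t ht
    · ext x
      simp only [Set.mem_inter_iff, Set.mem_sUnion, Set.mem_iUnion, exists_prop]
      constructor
      · rintro ⟨⟨t, htS, hxt⟩, hxK⟩
        have h := Set.ext_iff.mp (hV2 t htS) x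
        simp only [Set.mem_inter_iff] at h
        exact ⟨⟨t, htS, (h.mp ⟨hxt, hxK⟩).1⟩, hxK⟩
      · rintro ⟨⟨t, htS, hxt⟩, hxK⟩
        have h := Set.ext_iff.mp (hV2 t htS) x
        simp only [Set.mem_inter_iff] at h
        exact ⟨⟨t, htS, (h.mpr ⟨hxt, hxK⟩).1⟩, hxK⟩

/-- The k-extension of a topology `T`: like the Kelleyfication, but quantifying only over
`T`-closed `T`-compact sets. -/
def KelleyEx {X : Type*} (T : TopologicalSpace X) : TopologicalSpace X where
  IsOpen U := ∀ K : Set X, @IsCompact X T K → @IsClosed X T K →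
    ∃ V : Set X, T.IsOpen V ∧ U ∩ K = V ∩ K
  isOpen_univ K _ _ := ⟨univ, T.isOpen_univ, rfl⟩
  isOpen_inter := by
    intro s t hs ht K hK hKc
    obtain ⟨Vs, hVs, hsK⟩ := hs K hK hKc
    obtain ⟨Vt, hVt, htK⟩ := ht K hK hKc
    refine ⟨Vs ∩ Vt, T.isOpen_inter _ _ hVs hVt, ?_⟩
    ext x
    have h1 := Set.ext_iff.mp hsK x
    have h2 := Set.ext_iff.mp htK x
    simp only [Set.mem_inter_iff] at *
    tauto
  isOpen_sUnion := by
    intro S hS K hK hKc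
    choose! V hV1 hV2 using fun t (ht : t ∈ S) => hS t ht K hK hKc
    refine ⟨⋃ t ∈ S, V t, ?_, ?_⟩
    · letI := T
      exact isOpen_biUnion fun t ht => hV1 t ht
    · ext x
      simp only [Set.mem_inter_iff, Set.mem_sUnion, Set.mem_iUnion, exists_prop]
      constructor
      · rintro ⟨⟨t, htS, hxt⟩, hxK⟩
        have h := Set.ext_iff.mp (hV2 t htS) x
        simp only [Set.mem_inter_iff] at h
        exact ⟨⟨t, htS, (h.mp ⟨hxt, hxK⟩).1⟩, hxK⟩
      · rintro ⟨⟨t, htS, hxt⟩, hxK⟩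
        have h := Set.ext_iff.mp (hV2 t htS) x
        simp only [Set.mem_inter_iff] at h
        exact ⟨⟨t, htS, (h.mpr ⟨hxt, hxK⟩).1⟩, hxK⟩

/-- A topology is compactly generated iff it is Hausdorff and equals its Kelleyfication. -/
def IsCG {X : Type*} (T : TopologicalSpace X) : Prop :=
  @T2Space X T ∧ Kelley T = T

/-- Local compactness in the sense of the paper: every point of an open set `V` has an
open neighbourhood contained in a compact subset of `V`. -/
def LocCompact {Y : Type*} (t : TopologicalSpace Y) : Prop :=
  ∀ y : Y, ∀ V : Set Y, t.IsOpen V → y ∈ V →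
    ∃ K U : Set Y, y ∈ U ∧ t.IsOpen U ∧ U ⊆ K ∧ K ⊆ V ∧ @IsCompact Y t K

/-- A real compactly generated vector space: a compactly generated topology for which the
algebraic operations are continuous from the Kelleyfications of the product topologies. -/
def IsCGVS {X : Type*} [AddCommGroup X] [Module ℝ X] (T : TopologicalSpace X) : Prop :=
  IsCG T ∧
  Continuous[Kelley (@instTopologicalSpaceProd X X T T), T] (fun p : X × X => p.1 + p.2) ∧
  Continuous[Kelley (@instTopologicalSpaceProd ℝ X inferInstance T), T]
    (fun p : ℝ × X => p.1 • p.2)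

/-- Sequential completeness of a topologized additive group: every Cauchy sequence converges. -/
def SeqComplete {X : Type*} [AddCommGroup X] (U : TopologicalSpace X) : Prop :=
  ∀ u : ℕ → X, (∀ V ∈ @nhds X U 0, ∃ N : ℕ, ∀ m ≥ N, ∀ n ≥ N, u m - u n ∈ V) →
    ∃ x : X, Filter.Tendsto u Filter.atTop (@nhds X U x)

/-- Seip-convenient space: a compactly generated real vector space whose topology is the
Kelleyfication of a sequentially complete Hausdorff locally convex vector topology. -/
def IsSeipConvenient {X : Type*} [AddCommGroup X] [Module ℝ X] (T : TopologicalSpace X) : Prop :=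
  IsCGVS T ∧ ∃ U : TopologicalSpace X,
    @IsTopologicalAddGroup X U _ ∧ @ContinuousSMul ℝ X _ _ U ∧
    @LocallyConvexSpace ℝ X _ _ _ _ U ∧ @T2Space X U ∧ SeqComplete U ∧ T = Kelley U

/-- The compact-open topology on the full function space, generated by the usual subbasis. -/
def coTop {X Y : Type*} (tX : TopologicalSpace X) (tY : TopologicalSpace Y) :
    TopologicalSpace (X → Y) :=
  TopologicalSpace.generateFrom
    {S | ∃ (K : Set X) (V : Set Y), @IsCompact X tX K ∧ tY.IsOpen V ∧ S = {f | f '' K ⊆ V}}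

/-- `γ` is Riemann integrable to `x` on `[a,b]` with respect to the topology `T`. -/
def RiemannIntegrableTo {E : Type*} [AddCommGroup E] [Module ℝ E]
    (T : TopologicalSpace E) (a b : ℝ) (γ : ℝ → E) (x : E) : Prop :=
  ∀ V ∈ @nhds E T x, ∃ δ : ℝ, 0 < δ ∧ ∀ (k : ℕ) (t s : ℕ → ℝ),
    t 0 = a → t k = b → (∀ i < k, t i ≤ t (i + 1)) →
    (∀ i < k, t (i + 1) - t i < δ) →
    (∀ i < k, t i ≤ s i ∧ s i ≤ t (i + 1)) →
    (∑ i ∈ Finset.range k, (t (i + 1) - t i) • γ (s i)) ∈ V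

/-- `c` is differentiable to `x` at `t₀` (within `J`) with respect to the topology `T`. -/
def DiffTo {E : Type*} [AddCommGroup E] [Module ℝ E] (T : TopologicalSpace E)
    (J : Set ℝ) (c : ℝ → E) (t₀ : ℝ) (x : E) : Prop :=
  ∀ V ∈ @nhds E T x, ∃ δ : ℝ, 0 < δ ∧ ∀ t : ℝ, t₀ + t ∈ J → 0 < |t| → |t| < δ →
    t⁻¹ • (c (t₀ + t) - c t₀) ∈ V

lemma part_mem {k : ℕ} {t : ℕ → ℝ} (h : ∀ i < k, t i ≤ t (i + 1)) :
    ∀ j ≤ k, ∀ i ≤ j, t i ≤ t j := by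
  intro j hj
  induction j with
  | zero => intro i hi; simp [Nat.le_zero.mp hi]
  | succ n ih =>
    intro i hi
    rcases Nat.lt_or_ge i (n+1) with h'|h'
    · exact (ih (by omega) i (by omega)).trans (h n (by omega))
    · have : i = n + 1 := by omega
      simp [this]

lemma clamp_step (a b p q : ℝ) (hab : a ≤ b) (hpq : p ≤ q) :
    max a (min b q) - max a (min b p) = max 0 (min b q - max a p) := by
  rcases le_total q a with h|h
  · simp only [min_def, max_def]; split_ifs <;> linarith
  · rcases le_total b p with h'|h'
    · simp only [min_def, max_def]; split_ifs <;> linarith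
    · simp only [min_def, max_def]; split_ifs <;> linarith
lemma overlap_sum {l : ℕ} {u : ℕ → ℝ} (hu0 : u 0 = 0) (hul : u l = 1)
    (hmono : ∀ j < l, u j ≤ u (j + 1)) {a b : ℝ} (ha : 0 ≤ a) (hab : a ≤ b) (hb1 : b ≤ 1) :
    ∑ j ∈ Finset.range l, max 0 (min b (u (j + 1)) - max a (u j)) = b - a := by
  have : ∀ j ∈ Finset.range l, max 0 (min b (u (j + 1)) - max a (u j))
      = (fun j => max a (min b (u j))) (j + 1) - (fun j => max a (min b (u j))) j := by
    intro j hj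
    exact (clamp_step a b (u j) (u (j+1)) hab (hmono j (Finset.mem_range.mp hj))).symm
  rw [Finset.sum_congr rfl this, Finset.sum_range_sub (fun j => max a (min b (u j))) l]
  rw [hu0, hul]
  rw [min_eq_left hb1, max_eq_right hab, min_eq_right (ha.trans hab), max_eq_left ha]

section TwoSum
variable {E : Type*} [AddCommGroup E] [Module ℝ E]
open Set

lemma partition_pos {k : ℕ} {t : ℕ → ℝ} {δ : ℝ} (ht0 : t 0 = 0) (htk : t k = 1)
    (htδ : ∀ i < k, t (i+1) - t i < δ) : 0 < δ ∧ k ≠ 0 := by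
  have hk : k ≠ 0 := by rintro rfl; rw [ht0] at htk; norm_num at htk
  refine ⟨?_, hk⟩
  have h1 : ∑ i ∈ Finset.range k, (t (i+1) - t i) = 1 := by
    rw [Finset.sum_range_sub t k, htk, ht0]; ring
  have h2 : ∑ i ∈ Finset.range k, (t (i+1) - t i) < ∑ _i ∈ Finset.range k, δ :=
    Finset.sum_lt_sum_of_nonempty (Finset.nonempty_range_iff.mpr hk)
      (fun i hi => htδ i (Finset.mem_range.mp hi))
  rw [h1, Finset.sum_const, Finset.card_range, nsmul_eq_mul] at h2
  by_contra h
  push_neg at h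
  have : (k : ℝ) * δ ≤ 0 := mul_nonpos_of_nonneg_of_nonpos (Nat.cast_nonneg k) h
  linarith

lemma two_sum_mem {γ : ℝ → E} {W : Set E} (hW : Convex ℝ W) {δ : ℝ}
    (hγW : ∀ p ∈ Icc (0:ℝ) 1, ∀ q ∈ Icc (0:ℝ) 1, |p - q| < 2*δ → γ p - γ q ∈ W)
    {k l : ℕ} {t s u r : ℕ → ℝ}
    (ht0 : t 0 = 0) (htk : t k = 1) (htm : ∀ i < k, t i ≤ t (i+1))
    (htδ : ∀ i < k, t (i+1) - t i < δ) (hts : ∀ i < k, t i ≤ s i ∧ s i ≤ t (i+1))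
    (hu0 : u 0 = 0) (hul : u l = 1) (hum : ∀ j < l, u j ≤ u (j+1))
    (huδ : ∀ j < l, u (j+1) - u j < δ) (hur : ∀ j < l, u j ≤ r j ∧ r j ≤ u (j+1)) :
    (∑ i ∈ Finset.range k, (t (i+1) - t i) • γ (s i))
      - (∑ j ∈ Finset.range l, (u (j+1) - u j) • γ (r j)) ∈ W := by
  obtain ⟨hδpos, hk⟩ := partition_pos ht0 htk htδ
  -- bounds for partition points
  have htmem : ∀ i ≤ k, t i ∈ Icc (0:ℝ) 1 := by
    intro i hi
    constructor
    · rw [← ht0]; exact part_mem htm i hi 0 (Nat.zero_le i)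
    · rw [← htk]; exact part_mem htm k le_rfl i hi
  have humem : ∀ j ≤ l, u j ∈ Icc (0:ℝ) 1 := by
    intro j hj
    constructor
    · rw [← hu0]; exact part_mem hum j hj 0 (Nat.zero_le j)
    · rw [← hul]; exact part_mem hum l le_rfl j hj
  have hsmem : ∀ i < k, s i ∈ Icc (0:ℝ) 1 := fun i hi =>
    ⟨(htmem i hi.le).1.trans (hts i hi).1, (hts i hi).2.trans (htmem (i+1) hi).2⟩
  have hrmem : ∀ j < l, r j ∈ Icc (0:ℝ) 1 := fun j hj =>
    ⟨(humem j hj.le).1.trans (hur j hj).1, (hur j hj).2.trans (humem (j+1) hj).2⟩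
  set m : ℕ → ℕ → ℝ := fun i j => max 0 (min (t (i+1)) (u (j+1)) - max (t i) (u j)) with hm
  have hmnonneg : ∀ i j, 0 ≤ m i j := fun i j => le_max_left 0 _
  have hrow : ∀ i < k, ∑ j ∈ Finset.range l, m i j = t (i+1) - t i := by
    intro i hi
    exact overlap_sum hu0 hul hum (htmem i hi.le).1 (htm i hi) (htmem (i+1) hi).2
  have hcol : ∀ j < l, ∑ i ∈ Finset.range k, m i j = u (j+1) - u j := by
    intro j hj
    have : ∀ i, m i j = max 0 (min (u (j+1)) (t (i+1)) - max (u j) (t i)) := by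
      intro i; simp only [hm]; rw [min_comm (t (i+1)) (u (j+1)), max_comm (t i) (u j)]
    simp only [this]
    exact overlap_sum ht0 htk htm (humem j hj.le).1 (hum j hj) (humem (j+1) hj).2
  -- rewrite both sums as double sums
  have hS1 : (∑ i ∈ Finset.range k, (t (i+1) - t i) • γ (s i))
      = ∑ i ∈ Finset.range k, ∑ j ∈ Finset.range l, m i j • γ (s i) := by
    refine Finset.sum_congr rfl fun i hi => ?_
    rw [← Finset.sum_smul, hrow i (Finset.mem_range.mp hi)]
  have hS2 : (∑ j ∈ Finset.range l, (u (j+1) - u j) • γ (r j))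
      = ∑ i ∈ Finset.range k, ∑ j ∈ Finset.range l, m i j • γ (r j) := by
    rw [Finset.sum_comm]
    refine Finset.sum_congr rfl fun j hj => ?_
    rw [← Finset.sum_smul, hcol j (Finset.mem_range.mp hj)]
  rw [hS1, hS2, ← Finset.sum_sub_distrib]
  simp only [← Finset.sum_sub_distrib, ← smul_sub]
  -- convert to a sum over the product finset
  rw [← Finset.sum_product']
  have h0W : (0:E) ∈ W := by
    have := hγW 0 (by norm_num) 0 (by norm_num) (by simp; linarith)
    simpa using this
  set z : ℕ × ℕ → E := fun p => if m p.1 p.2 = 0 then 0 else γ (s p.1) - γ (r p.2) with hz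
  have hzeq : ∀ p ∈ Finset.range k ×ˢ Finset.range l,
      m p.1 p.2 • (γ (s p.1) - γ (r p.2)) = m p.1 p.2 • z p := by
    intro p _
    by_cases h : m p.1 p.2 = 0
    · simp [hz, h]
    · simp [hz, h]
  rw [Finset.sum_congr rfl hzeq]
  apply hW.sum_mem (fun p _ => hmnonneg p.1 p.2)
  · -- total weight 1
    rw [Finset.sum_product]
    have : ∀ i ∈ Finset.range k, ∑ j ∈ Finset.range l, m i j = t (i+1) - t i :=
      fun i hi => hrow i (Finset.mem_range.mp hi)
    rw [Finset.sum_congr rfl this, Finset.sum_range_sub t k, htk, ht0]; ring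
  · -- each z p ∈ W
    rintro ⟨i, j⟩ hp
    rw [Finset.mem_product, Finset.mem_range, Finset.mem_range] at hp
    obtain ⟨hik, hjl⟩ := hp
    by_cases h : m i j = 0
    · simp [hz, h, h0W]
    · simp only [hz, h, if_false]
      have hmpos : 0 < min (t (i+1)) (u (j+1)) - max (t i) (u j) := by
        rcases lt_or_ge 0 (min (t (i+1)) (u (j+1)) - max (t i) (u j)) with h'|h'
        · exact h'
        · exfalso; apply h; rw [hm]; simp only; rw [max_eq_left h']
      have h1 : t i < u (j+1) := by
        have := lt_of_le_of_lt (le_max_left (t i) (u j)) (lt_of_lt_of_le (by linarith) (min_le_right _ _))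
        exact this
      have h2 : u j < t (i+1) := by
        have := lt_of_le_of_lt (le_max_right (t i) (u j)) (lt_of_lt_of_le (by linarith) (min_le_left _ _))
        exact this
      apply hγW _ (hsmem i hik) _ (hrmem j hjl)
      have ht1 := htδ i hik
      have hu1 := huδ j hjl
      obtain ⟨hs1, hs2⟩ := hts i hik
      obtain ⟨hr1, hr2⟩ := hur j hjl
      rw [abs_lt]
      constructor <;> linarith
end TwoSum

noncomputable def upt (n : ℕ) : ℕ → ℝ := fun i => (i : ℝ) / (n + 1)

lemma upt_zero (n : ℕ) : upt n 0 = 0 := by simp [upt]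
lemma upt_last (n : ℕ) : upt n (n + 1) = 1 := by
  simp only [upt]; push_cast; field_simp
lemma upt_step (n : ℕ) (i : ℕ) : upt n (i + 1) - upt n i = 1 / (n + 1) := by
  simp only [upt]; push_cast; field_simp; ring
lemma upt_mono (n : ℕ) : ∀ i < n + 1, upt n i ≤ upt n (i + 1) := by
  intro i _
  have := upt_step n i
  have h : (0:ℝ) < 1 / (n+1) := by positivity
  linarith
lemma upt_mesh (n : ℕ) {δ : ℝ} (h : 1 / ((n:ℝ) + 1) < δ) : ∀ i < n + 1, upt n (i+1) - upt n i < δ := by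
  intro i _; rw [upt_step]; exact h
lemma upt_tag (n : ℕ) : ∀ i < n + 1, upt n i ≤ upt n i ∧ upt n i ≤ upt n (i + 1) := by
  intro i hi; exact ⟨le_refl _, upt_mono n i hi⟩

section Aux
variable {E : Type*} [AddCommGroup E] [Module ℝ E]
    [TopologicalSpace E] [IsTopologicalAddGroup E] [ContinuousSMul ℝ E]

lemma unif_cont_compact {X : Type*} [MetricSpace X] {K : Set X} (hK : IsCompact K)
    {f : X → E} (hf : ContinuousOn f K) {W : Set E} (hW : W ∈ 𝓝 (0 : E)) :
    ∃ δ : ℝ, 0 < δ ∧ ∀ p ∈ K, ∀ q ∈ K, dist p q < δ → f p - f q ∈ W := by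
  have hWp : (fun z : E × E => z.1 - z.2) ⁻¹' W ∈ 𝓝 ((0 : E), (0 : E)) :=
    (continuous_sub).continuousAt.preimage_mem_nhds (by simpa using hW)
  obtain ⟨W₁, hW₁, W₂, hW₂, hWsub⟩ := mem_nhds_prod_iff.mp hWp
  set W' := W₁ ∩ W₂ with hW'def
  have hW' : W' ∈ 𝓝 (0 : E) := inter_mem hW₁ hW₂
  have hsubW : ∀ a b : E, a ∈ W' → b ∈ W' → a - b ∈ W := fun a b ha hb =>
    hWsub (Set.mk_mem_prod ha.1 hb.2)
  have hloc : ∀ p : X, p ∈ K → ∃ δ : ℝ, 0 < δ ∧ ∀ q ∈ K, dist q p < δ → f q - f p ∈ W' := by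
    intro p hp
    have hcont : ContinuousWithinAt (fun q => f q - f p) K p :=
      (hf p hp).sub continuousWithinAt_const
    have hmem : (fun q => f q - f p) ⁻¹' W' ∈ 𝓝[K] p := hcont (by simpa using hW')
    obtain ⟨ε, hε, hb⟩ := Metric.mem_nhdsWithin_iff.mp hmem
    exact ⟨ε, hε, fun q hq hd => hb ⟨Metric.mem_ball.mpr hd, hq⟩⟩
  choose! δp hδp hδp' using hloc
  -- cover by balls of radius δp p / 2
  have hcover : K ⊆ ⋃ p : K, Metric.ball (p : X) (δp p / 2) := by
    intro q hq
    exact Set.mem_iUnion.mpr ⟨⟨q, hq⟩, by simpa using half_pos (hδp q hq)⟩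
  obtain ⟨F, hF⟩ := hK.elim_finite_subcover _ (fun p : K => Metric.isOpen_ball) hcover
  by_cases hFne : F.Nonempty
  · set δ := F.inf' hFne (fun p => δp p / 2) with hδdef
    have hδpos : 0 < δ := by
      rw [hδdef, Finset.lt_inf'_iff]
      exact fun p _ => half_pos (hδp p p.2)
    refine ⟨δ, hδpos, fun p hp q hq hd => ?_⟩
    obtain ⟨r, hrF, hpr⟩ : ∃ r ∈ F, p ∈ Metric.ball (r : X) (δp r / 2) := by
      have := hF hp
      simpa using this
    have h1 : dist p r < δp r := by
      have := Metric.mem_ball.mp hpr; linarith [hδp r r.2]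
    have h2 : dist q r < δp r := by
      have hδle : δ ≤ δp r / 2 := Finset.inf'_le _ hrF
      have := Metric.mem_ball.mp hpr
      calc dist q r ≤ dist q p + dist p r := dist_triangle _ _ _
        _ < δ + δp r / 2 := by rw [dist_comm q p]; linarith
        _ ≤ δp r := by linarith
    have := hsubW _ _ (hδp' r r.2 p hp h1) (hδp' r r.2 q hq h2)
    simpa using this
  · refine ⟨1, one_pos, fun p hp => absurd (hF hp) ?_⟩
    simp [Finset.not_nonempty_iff_eq_empty.mp hFne]
end Aux

section RI
variable {E : Type*} [AddCommGroup E] [Module ℝ E]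
    [T : TopologicalSpace E] [IsTopologicalAddGroup E] [ContinuousSMul ℝ E]

lemma RI_sub {a b : ℝ} {γ₁ γ₂ : ℝ → E} {x₁ x₂ : E}
    (h1 : RiemannIntegrableTo T a b γ₁ x₁) (h2 : RiemannIntegrableTo T a b γ₂ x₂) :
    RiemannIntegrableTo T a b (fun s => γ₁ s - γ₂ s) (x₁ - x₂) := by
  intro V hV
  have hVp : (fun z : E × E => z.1 - z.2) ⁻¹' V ∈ 𝓝 (x₁, x₂) :=
    continuous_sub.continuousAt.preimage_mem_nhds (by simpa using hV)
  obtain ⟨V₁, hV₁, V₂, hV₂, hVsub⟩ := mem_nhds_prod_iff.mp hVp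
  obtain ⟨δ₁, hδ₁, H₁⟩ := h1 V₁ hV₁
  obtain ⟨δ₂, hδ₂, H₂⟩ := h2 V₂ hV₂
  refine ⟨min δ₁ δ₂, lt_min hδ₁ hδ₂, fun k t s h0 hk hm hδ hts => ?_⟩
  have e : (∑ i ∈ Finset.range k, (t (i+1) - t i) • (γ₁ (s i) - γ₂ (s i)))
      = (∑ i ∈ Finset.range k, (t (i+1) - t i) • γ₁ (s i))
        - (∑ i ∈ Finset.range k, (t (i+1) - t i) • γ₂ (s i)) := by
    rw [← Finset.sum_sub_distrib]; exact Finset.sum_congr rfl fun i _ => smul_sub _ _ _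
  rw [show (fun s => γ₁ s - γ₂ s) = fun s => γ₁ s - γ₂ s from rfl]
  simp only
  rw [e]
  exact hVsub (Set.mk_mem_prod
    (H₁ k t s h0 hk hm (fun i hi => lt_of_lt_of_le (hδ i hi) (min_le_left _ _)) hts)
    (H₂ k t s h0 hk hm (fun i hi => lt_of_lt_of_le (hδ i hi) (min_le_right _ _)) hts))

lemma RI_smul {a b : ℝ} {γ : ℝ → E} {x : E} (r : ℝ)
    (h : RiemannIntegrableTo T a b γ x) :
    RiemannIntegrableTo T a b (fun s => r • γ s) (r • x) := by
  intro V hV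
  have hVp : (fun z : E => r • z) ⁻¹' V ∈ 𝓝 x :=
    (continuous_const_smul r).continuousAt.preimage_mem_nhds hV
  obtain ⟨δ, hδ, H⟩ := h _ hVp
  refine ⟨δ, hδ, fun k t s h0 hk hm hδ' hts => ?_⟩
  have e : (∑ i ∈ Finset.range k, (t (i+1) - t i) • (r • γ (s i)))
      = r • (∑ i ∈ Finset.range k, (t (i+1) - t i) • γ (s i)) := by
    rw [Finset.smul_sum]; exact Finset.sum_congr rfl fun i _ => smul_comm _ _ _
  simp only
  rw [e]
  exact H k t s h0 hk hm hδ' hts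

lemma RI_mem_closure {γ : ℝ → E} {x : E} {C : Set E}
    (h : RiemannIntegrableTo T 0 1 γ x) (hC : Convex ℝ C)
    (hmem : ∀ s ∈ Icc (0:ℝ) 1, γ s ∈ C) : x ∈ closure C := by
  rw [mem_closure_iff_nhds]
  intro V hV
  obtain ⟨δ, hδ, H⟩ := h V hV
  obtain ⟨n, hn⟩ := exists_nat_gt (1/δ)
  have hmesh : 1 / ((n:ℝ) + 1) < δ := by
    rw [div_lt_iff₀ (by positivity)]
    have : (1:ℝ)/δ < n + 1 := by linarith
    rw [div_lt_iff₀ hδ] at this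
    linarith
  have hS := H (n+1) (upt n) (upt n) (upt_zero n) (by push_cast [upt_last n]; norm_num)
    (upt_mono n) (upt_mesh n hmesh) (upt_tag n)
  refine ⟨_, hS, ?_⟩
  -- the Riemann sum is a convex combination of values of γ in C
  have htmem : ∀ i ≤ n + 1, upt n i ∈ Icc (0:ℝ) 1 := by
    intro i hi
    constructor
    · rw [← upt_zero n]; exact part_mem (upt_mono n) i hi 0 (Nat.zero_le i)
    · rw [← upt_last n]; exact part_mem (upt_mono n) (n+1) le_rfl i hi
  apply hC.sum_mem
  · intro i hi
    have := upt_mono n i (Finset.mem_range.mp hi)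
    linarith
  · rw [Finset.sum_range_sub (upt n) (n+1), upt_last, upt_zero]; ring
  · intro i hi
    exact hmem _ (htmem i (Finset.mem_range.mp hi).le)

lemma exists_RI [LocallyConvexSpace ℝ E] (hsc : SeqComplete T) {γ : ℝ → E}
    (hγ : ContinuousOn γ (Icc 0 1)) :
    ∃ x : E, RiemannIntegrableTo T 0 1 γ x := by
  have hbasis := (locallyConvexSpace_iff ℝ E).mp inferInstance 0
  -- helper to extract convex neighborhoods
  have hconvex : ∀ V ∈ 𝓝 (0:E), ∃ W, W ∈ 𝓝 (0:E) ∧ Convex ℝ W ∧ W ⊆ V := by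
    intro V hV
    obtain ⟨W, ⟨hW1, hW2⟩, hW3⟩ := hbasis.mem_iff.mp hV
    exact ⟨W, hW1, hW2, hW3⟩
  -- helper giving uniform continuity in |·| form
  have hUC : ∀ W ∈ 𝓝 (0:E), ∃ δ : ℝ, 0 < δ ∧
      ∀ p ∈ Icc (0:ℝ) 1, ∀ q ∈ Icc (0:ℝ) 1, |p - q| < 2*δ → γ p - γ q ∈ W := by
    intro W hW
    obtain ⟨δ₀, hδ₀, H⟩ := unif_cont_compact isCompact_Icc hγ hW
    refine ⟨δ₀ / 2, half_pos hδ₀, fun p hp q hq hpq => ?_⟩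
    exact H p hp q hq (by rw [Real.dist_eq]; linarith)
  -- the canonical sequence of Riemann sums
  set RS : ℕ → E := fun n => ∑ i ∈ Finset.range (n+1),
    (upt n (i+1) - upt n i) • γ (upt n i) with hRS
  have hupt_last' : ∀ n : ℕ, upt n (n+1) = 1 := upt_last
  -- Cauchy
  have hcauchy : ∀ V ∈ 𝓝 (0:E), ∃ N : ℕ, ∀ m ≥ N, ∀ n ≥ N, RS m - RS n ∈ V := by
    intro V hV
    obtain ⟨W, hW, hWc, hWV⟩ := hconvex V hV
    obtain ⟨δ, hδ, H⟩ := hUC W hW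
    obtain ⟨N, hN⟩ := exists_nat_gt (1/δ)
    have hmesh : ∀ n ≥ N, 1 / ((n:ℝ) + 1) < δ := by
      intro n hn
      rw [div_lt_iff₀ (by positivity)]
      have h1 : (1:ℝ)/δ < N + 1 := by linarith
      rw [div_lt_iff₀ hδ] at h1
      have h2 : (N:ℝ) ≤ n := Nat.cast_le.mpr hn
      nlinarith
    refine ⟨N, fun m hm n hn => hWV ?_⟩
    exact two_sum_mem hWc H (upt_zero m) (upt_last m) (upt_mono m)
      (upt_mesh m (hmesh m hm)) (upt_tag m) (upt_zero n) (upt_last n) (upt_mono n)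
      (upt_mesh n (hmesh n hn)) (upt_tag n)
  obtain ⟨x, hx⟩ := hsc RS hcauchy
  refine ⟨x, fun V hV => ?_⟩
  -- choose W₀ with x + W₀ + W₀ ⊆ V
  have hmap : (fun z : E × E => x + z.1 + z.2) ⁻¹' V ∈ 𝓝 ((0:E), (0:E)) := by
    have hcont : Continuous (fun z : E × E => x + z.1 + z.2) := by continuity
    exact hcont.continuousAt.preimage_mem_nhds (by simpa using hV)
  obtain ⟨W₁, hW₁, W₂, hW₂, hWsub⟩ := mem_nhds_prod_iff.mp hmap
  obtain ⟨W, hW, hWc, hWV⟩ := hconvex (W₁ ∩ W₂) (inter_mem hW₁ hW₂)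
  obtain ⟨δ, hδ, H⟩ := hUC W hW
  refine ⟨δ, hδ, fun k t s h0 hk hm hδ' hts => ?_⟩
  -- find n with small mesh and RS n close to x
  have hev1 : ∀ᶠ n : ℕ in atTop, 1 / ((n:ℝ)+1) < δ := by
    obtain ⟨N, hN⟩ := exists_nat_gt (1/δ)
    filter_upwards [eventually_ge_atTop N] with n hn
    rw [div_lt_iff₀ (by positivity)]
    have h1 : (1:ℝ)/δ < N + 1 := by linarith
    rw [div_lt_iff₀ hδ] at h1
    have h2 : (N:ℝ) ≤ n := Nat.cast_le.mpr hn
    nlinarith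
  have hev2 : ∀ᶠ n : ℕ in atTop, RS n - x ∈ W₁ := by
    have : (fun z : E => z - x) ⁻¹' W₁ ∈ 𝓝 x :=
      (continuous_id.sub continuous_const).continuousAt.preimage_mem_nhds (by simpa using hW₁)
    exact hx this
  obtain ⟨n, hn1, hn2⟩ := (hev1.and hev2).exists
  have hdiff : (∑ i ∈ Finset.range k, (t (i+1) - t i) • γ (s i)) - RS n ∈ W :=
    two_sum_mem hWc H h0 hk hm hδ' hts (upt_zero n) (upt_last n) (upt_mono n)
      (upt_mesh n hn1) (upt_tag n)
  have hfin := hWsub (Set.mk_mem_prod hn2 ((hWV hdiff).2))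
  simp only [Set.mem_preimage] at hfin
  have e : x + (RS n - x) + ((∑ i ∈ Finset.range k, (t (i+1) - t i) • γ (s i)) - RS n)
      = ∑ i ∈ Finset.range k, (t (i+1) - t i) • γ (s i) := by abel
  rwa [e] at hfin
end RI

section MVT
variable {E : Type*} [AddCommGroup E] [Module ℝ E]
    [T : TopologicalSpace E] [IsTopologicalAddGroup E] [ContinuousSMul ℝ E]


lemma diffTo_comp_clm {φ : ℝ → E} {τ : ℝ} {x : E} (f : E →L[ℝ] ℝ)
    (h : DiffTo T (Icc 0 1) φ τ x) :
    HasDerivWithinAt (fun r => f (φ r)) (f x) (Icc 0 1) τ := by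
  rw [hasDerivWithinAt_iff_tendsto_slope]
  intro V hV
  obtain ⟨δ, hδ, H⟩ := h (f ⁻¹' V) (f.continuous.continuousAt.preimage_mem_nhds hV)
  rw [Filter.mem_map]
  rw [Metric.mem_nhdsWithin_iff]
  refine ⟨δ, hδ, ?_⟩
  rintro r ⟨hball, hr, hrne⟩
  have hrne' : r ≠ τ := hrne
  have h1 : 0 < |r - τ| := by
    rw [abs_pos]; exact sub_ne_zero_of_ne hrne'
  have h2 : |r - τ| < δ := by
    rw [Metric.mem_ball, Real.dist_eq] at hball; exact hball
  have h3 : τ + (r - τ) ∈ Icc (0:ℝ) 1 := by rwa [add_sub_cancel]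
  have := H (r - τ) h3 h1 h2
  simp only [Set.mem_preimage, add_sub_cancel] at this
  rw [map_smul, map_sub] at this
  simpa [slope, vsub_eq_sub, smul_eq_mul] using this

lemma mvt_convex [LocallyConvexSpace ℝ E] {φ : ℝ → E} {d : ℝ → E} {α β : ℝ}
    (hαβ : α < β) (hsub : Icc α β ⊆ Icc 0 1) {C : Set E} (hC : Convex ℝ C)
    (hCc : IsClosed C) (hd : ∀ τ ∈ Icc α β, DiffTo T (Icc 0 1) φ τ (d τ))
    (hmem : ∀ τ ∈ Icc α β, d τ ∈ C) : (β - α)⁻¹ • (φ β - φ α) ∈ C := by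
  by_contra hnot
  obtain ⟨f, u, hfu, hux⟩ := geometric_hahn_banach_closed_point hC hCc hnot
  have hα01 : α ∈ Icc (0:ℝ) 1 := hsub ⟨le_refl α, hαβ.le⟩
  have hβ01 : β ∈ Icc (0:ℝ) 1 := hsub ⟨hαβ.le, le_refl β⟩
  have hderiv : ∀ τ ∈ Icc α β, HasDerivWithinAt (fun r => f (φ r)) (f (d τ)) (Icc 0 1) τ :=
    fun τ hτ => diffTo_comp_clm f (hd τ hτ)
  have hcont : ContinuousOn (fun r => f (φ r)) (Icc α β) := fun τ hτ =>
    ((hderiv τ hτ).continuousWithinAt).mono hsub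
  have hderiv' : ∀ τ ∈ Ioo α β, HasDerivAt (fun r => f (φ r)) (f (d τ)) τ := by
    intro τ hτ
    have hτ01 : τ ∈ Ioo (0:ℝ) 1 :=
      ⟨lt_of_le_of_lt hα01.1 hτ.1, lt_of_lt_of_le hτ.2 hβ01.2⟩
    exact (hderiv τ ⟨hτ.1.le, hτ.2.le⟩).hasDerivAt (Icc_mem_nhds hτ01.1 hτ01.2)
  obtain ⟨ξ, hξ, hslope⟩ := exists_hasDerivAt_eq_slope (fun r => f (φ r))
    (fun τ => f (d τ)) hαβ hcont hderiv'
  have hval : f ((β - α)⁻¹ • (φ β - φ α)) = (f (φ β) - f (φ α)) / (β - α) := by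
    rw [map_smul, map_sub, smul_eq_mul, div_eq_inv_mul]
  have h1 : f (d ξ) < u := hfu _ (hmem ξ ⟨hξ.1.le, hξ.2.le⟩)
  rw [hslope, ← hval] at h1
  exact absurd hux (not_lt.mpr h1.le)
end MVT

section Main
variable {E : Type*} [AddCommGroup E] [Module ℝ E]
    [T : TopologicalSpace E] [IsTopologicalAddGroup E] [ContinuousSMul ℝ E]

lemma exists_convex_nhds [LocallyConvexSpace ℝ E] {V : Set E} (hV : V ∈ 𝓝 (0:E)) :
    ∃ W, W ∈ 𝓝 (0:E) ∧ Convex ℝ W ∧ W ⊆ V := by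
  obtain ⟨W, ⟨hW1, hW2⟩, hW3⟩ := (((locallyConvexSpace_iff ℝ E).mp inferInstance 0).mem_iff).mp hV
  exact ⟨W, hW1, hW2, hW3⟩

lemma diffTo_continuousWithinAt {c : ℝ → E} {t₀ : ℝ} {y : E}
    (h : DiffTo T (Icc 0 1) c t₀ y) : ContinuousWithinAt c (Icc 0 1) t₀ := by
  intro V hV
  have hsm : (fun p : ℝ × E => c t₀ + p.1 • p.2) ⁻¹' V ∈ 𝓝 ((0:ℝ), y) := by
    have hcont : Continuous (fun p : ℝ × E => c t₀ + p.1 • p.2) :=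
      continuous_const.add (continuous_fst.smul continuous_snd)
    exact hcont.continuousAt.preimage_mem_nhds (by simpa using hV)
  obtain ⟨A, hA, B, hB, hAB⟩ := mem_nhds_prod_iff.mp hsm
  obtain ⟨ε, hε, hball⟩ := Metric.mem_nhds_iff.mp hA
  obtain ⟨δ, hδ, H⟩ := h B hB
  rw [Filter.mem_map, Metric.mem_nhdsWithin_iff]
  refine ⟨min δ ε, lt_min hδ hε, ?_⟩
  rintro r ⟨hrball, hr01⟩
  rw [Metric.mem_ball, Real.dist_eq, lt_min_iff] at hrball
  by_cases hr : r = t₀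
  · simp only [Set.mem_preimage, hr]
    exact mem_of_mem_nhds hV
  · have habs : 0 < |r - t₀| := abs_pos.mpr (sub_ne_zero_of_ne hr)
    have hq := H (r - t₀) (by rwa [add_sub_cancel]) habs hrball.1
    have hA' : r - t₀ ∈ A := hball (by rw [Metric.mem_ball, Real.dist_eq, sub_zero]; exact hrball.2)
    have hfin := hAB (Set.mk_mem_prod hA' hq)
    simp only [Set.mem_preimage] at hfin ⊢
    rwa [smul_inv_smul₀ (sub_ne_zero_of_ne hr), show t₀ + (r - t₀) = r from by ring,
      show c t₀ + (c r - c t₀) = c r from by abel] at hfin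

theorem diff_under_integral_aux [LocallyConvexSpace ℝ E] [T2Space E] (hsc : SeqComplete T)
    (Γ : ℝ → ℝ → E)
    (g : ℝ → ℝ → E)
    (hdiff : ∀ s ∈ Set.Icc (0 : ℝ) 1, ∀ t ∈ Set.Icc (0 : ℝ) 1,
      DiffTo T (Set.Icc 0 1) (Γ s) t (g s t))
    (hg : ContinuousOn (fun p : ℝ × ℝ => g p.1 p.2) (Set.Icc 0 1 ×ˢ Set.Icc 0 1))
    (c : ℝ → E)
    (hc : ∀ t ∈ Set.Icc (0 : ℝ) 1, RiemannIntegrableTo T 0 1 (fun s => Γ s t) (c t)) :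
    (∀ t ∈ Set.Icc (0 : ℝ) 1, ∃ y : E,
      RiemannIntegrableTo T 0 1 (fun s => g s t) y ∧ DiffTo T (Set.Icc 0 1) c t y) ∧
    ContinuousWithinAt c (Set.Icc 0 1) 0 ∧ ContinuousWithinAt c (Set.Icc 0 1) 1 := by
  have key : ∀ t₀ ∈ Set.Icc (0 : ℝ) 1, ∃ y : E,
      RiemannIntegrableTo T 0 1 (fun s => g s t₀) y ∧ DiffTo T (Set.Icc 0 1) c t₀ y := by
    intro t₀ ht₀
    have gcont : ContinuousOn (fun s => g s t₀) (Icc 0 1) := by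
      have : (fun s => g s t₀) = (fun p : ℝ × ℝ => g p.1 p.2) ∘ (fun s => (s, t₀)) := rfl
      rw [this]
      exact hg.comp ((continuous_id.prodMk continuous_const).continuousOn)
        (fun s hs => Set.mk_mem_prod hs ht₀)
    obtain ⟨y, hy⟩ := exists_RI hsc gcont
    refine ⟨y, hy, ?_⟩
    intro V hV
    have hmap : (fun z : E × E => y + z.1 + z.2) ⁻¹' V ∈ 𝓝 ((0:E), (0:E)) := by
      have hcont : Continuous (fun z : E × E => y + z.1 + z.2) := by continuity
      exact hcont.continuousAt.preimage_mem_nhds (by simpa using hV)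
    obtain ⟨W₁, hW₁, W₂, hW₂, hWsub⟩ := mem_nhds_prod_iff.mp hmap
    obtain ⟨W, hW, hWc, hWV⟩ := exists_convex_nhds (inter_mem hW₁ hW₂)
    obtain ⟨δ, hδpos, Hg⟩ := unif_cont_compact (isCompact_Icc.prod isCompact_Icc) hg hW
    refine ⟨δ, hδpos, fun h hmem01 habs hlt => ?_⟩
    have hne : h ≠ 0 := fun hh => by simp [hh] at habs
    set Z := h⁻¹ • (c (t₀ + h) - c t₀) with hZ
    have hRI_D : RiemannIntegrableTo T 0 1
        (fun s => h⁻¹ • (Γ s (t₀ + h) - Γ s t₀)) Z :=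
      RI_smul h⁻¹ (RI_sub (hc (t₀ + h) hmem01) (hc t₀ ht₀))
    have hRI_diff : RiemannIntegrableTo T 0 1
        (fun s => h⁻¹ • (Γ s (t₀ + h) - Γ s t₀) - g s t₀) (Z - y) := RI_sub hRI_D hy
    -- the difference quotients lie in g s t₀ + closure W
    have keymem : ∀ s ∈ Icc (0:ℝ) 1,
        h⁻¹ • (Γ s (t₀ + h) - Γ s t₀) - g s t₀ ∈ closure W := by
      intro s hs
      set C : Set E := (fun v => v - g s t₀) ⁻¹' closure W with hC
      have hCc : IsClosed C := isClosed_closure.preimage (continuous_id.sub continuous_const)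
      have hCconv : Convex ℝ C := by
        intro v₁ h₁ v₂ h₂ a b ha hb hab
        simp only [hC, Set.mem_preimage] at h₁ h₂ ⊢
        have e : a • v₁ + b • v₂ - g s t₀ = a • (v₁ - g s t₀) + b • (v₂ - g s t₀) := by
          have h1 : a • g s t₀ + b • g s t₀ = g s t₀ := by rw [← add_smul, hab, one_smul]
          rw [smul_sub, smul_sub, show a • v₁ - a • g s t₀ + (b • v₂ - b • g s t₀)
            = a • v₁ + b • v₂ - (a • g s t₀ + b • g s t₀) from by abel, h1]
        rw [e]
        exact (hWc.closure) h₁ h₂ ha hb hab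
      have hCmem : h⁻¹ • (Γ s (t₀ + h) - Γ s t₀) ∈ C := by
        rcases lt_or_gt_of_ne hne with hneg|hpos
        · have hαβ : t₀ + h < t₀ := by linarith
          have hsub : Icc (t₀ + h) t₀ ⊆ Icc (0:ℝ) 1 := fun τ hτ =>
            ⟨le_trans hmem01.1 hτ.1, le_trans hτ.2 ht₀.2⟩
          have hd : ∀ τ ∈ Icc (t₀ + h) t₀, DiffTo T (Icc 0 1) (Γ s) τ (g s τ) :=
            fun τ hτ => hdiff s hs τ (hsub hτ)
          have hmemC : ∀ τ ∈ Icc (t₀ + h) t₀, g s τ ∈ C := by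
            intro τ hτ
            simp only [hC, Set.mem_preimage]
            apply subset_closure
            apply Hg (s, τ) (Set.mk_mem_prod hs (hsub hτ)) (s, t₀) (Set.mk_mem_prod hs ht₀)
            rw [Prod.dist_eq]
            apply max_lt
            · simpa using hδpos
            · rw [Real.dist_eq, abs_lt]
              rw [abs_lt] at hlt
              obtain ⟨h1, h2⟩ := hτ
              constructor <;> linarith
          have hres := mvt_convex hαβ hsub hCconv hCc hd hmemC
          have e : (t₀ - (t₀ + h))⁻¹ • (Γ s t₀ - Γ s (t₀ + h))
              = h⁻¹ • (Γ s (t₀ + h) - Γ s t₀) := by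
            rw [show t₀ - (t₀ + h) = -h from by ring, inv_neg, neg_smul, ← smul_neg, neg_sub]
          rwa [e] at hres
        · have hαβ : t₀ < t₀ + h := by linarith
          have hsub : Icc t₀ (t₀ + h) ⊆ Icc (0:ℝ) 1 := fun τ hτ =>
            ⟨le_trans ht₀.1 hτ.1, le_trans hτ.2 hmem01.2⟩
          have hd : ∀ τ ∈ Icc t₀ (t₀ + h), DiffTo T (Icc 0 1) (Γ s) τ (g s τ) :=
            fun τ hτ => hdiff s hs τ (hsub hτ)
          have hmemC : ∀ τ ∈ Icc t₀ (t₀ + h), g s τ ∈ C := by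
            intro τ hτ
            simp only [hC, Set.mem_preimage]
            apply subset_closure
            apply Hg (s, τ) (Set.mk_mem_prod hs (hsub hτ)) (s, t₀) (Set.mk_mem_prod hs ht₀)
            rw [Prod.dist_eq]
            apply max_lt
            · simpa using hδpos
            · rw [Real.dist_eq, abs_lt]
              rw [abs_lt] at hlt
              obtain ⟨h1, h2⟩ := hτ
              constructor <;> linarith
          have hres := mvt_convex hαβ hsub hCconv hCc hd hmemC
          rwa [show t₀ + h - t₀ = h from by ring] at hres
      simpa [hC] using hCmem
    have hcl : Z - y ∈ closure (closure W) :=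
      RI_mem_closure hRI_diff hWc.closure keymem
    rw [closure_closure] at hcl
    -- extract w ∈ W near Z - y
    have hN : {v : E | (Z - y) - v ∈ W₁} ∈ 𝓝 (Z - y) := by
      have : (fun v : E => (Z - y) - v) ⁻¹' W₁ ∈ 𝓝 (Z - y) :=
        (continuous_const.sub continuous_id).continuousAt.preimage_mem_nhds (by simpa using hW₁)
      exact this
    obtain ⟨w, hwN, hwW⟩ := mem_closure_iff_nhds.mp hcl _ hN
    have hfin := hWsub (Set.mk_mem_prod (hwN : (Z - y) - w ∈ W₁) (hWV hwW).2)
    simp only [Set.mem_preimage] at hfin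
    have e : y + ((Z - y) - w) + w = Z := by abel
    rwa [e] at hfin
  refine ⟨key, ?_, ?_⟩
  · obtain ⟨y, _, hd⟩ := key 0 (by norm_num)
    exact diffTo_continuousWithinAt hd
  · obtain ⟨y, _, hd⟩ := key 1 (by norm_num)
    exact diffTo_continuousWithinAt hd
end Main

/-- Differentiation under the integral sign: Let `E` be a sequentially
complete Hausdorff real locally convex topological vector space, and `Γ : [0,1] → E^[0,1]`
continuous into the product (pointwise convergence) topology, such that each curve `Γ s` is
differentiable at every `t ∈ [0,1]` to a unique element `g s t`, with `g` continuous on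
`[0,1] × [0,1]`.  If `c t` is the Riemann integral over `s ∈ [0,1]` of `Γ s t`, then for
every `t ∈ [0,1]` the curve `c` is differentiable at `t` to the Riemann integral over
`s ∈ [0,1]` of `g s t` (which exists); in particular `c` is a standard differentiable curve,
being in addition continuous at `0` and `1`. -/
theorem diff_under_integral {E : Type*} [AddCommGroup E] [Module ℝ E]
    [T : TopologicalSpace E] [IsTopologicalAddGroup E] [ContinuousSMul ℝ E]
    [LocallyConvexSpace ℝ E] [T2Space E] (hsc : SeqComplete T)
    (Γ : ℝ → ℝ → E)
    (hΓcont : ContinuousOn (fun s => fun t : Set.Icc (0 : ℝ) 1 => Γ s t) (Set.Icc 0 1))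
    (g : ℝ → ℝ → E)
    (hdiff : ∀ s ∈ Set.Icc (0 : ℝ) 1, ∀ t ∈ Set.Icc (0 : ℝ) 1,
      DiffTo T (Set.Icc 0 1) (Γ s) t (g s t) ∧
        ∀ y : E, DiffTo T (Set.Icc 0 1) (Γ s) t y → y = g s t)
    (hg : ContinuousOn (fun p : ℝ × ℝ => g p.1 p.2) (Set.Icc 0 1 ×ˢ Set.Icc 0 1))
    (c : ℝ → E)
    (hc : ∀ t ∈ Set.Icc (0 : ℝ) 1, RiemannIntegrableTo T 0 1 (fun s => Γ s t) (c t)) :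
    (∀ t ∈ Set.Icc (0 : ℝ) 1, ∃ y : E,
      RiemannIntegrableTo T 0 1 (fun s => g s t) y ∧ DiffTo T (Set.Icc 0 1) c t y) ∧
    ContinuousWithinAt c (Set.Icc 0 1) 0 ∧ ContinuousWithinAt c (Set.Icc 0 1) 1 :=
  diff_under_integral_aux hsc Γ g (fun s hs t ht => (hdiff s hs t ht).1) hg c hc
end

section
/- Let Ω ⊆ ℝ with [0,1] ⊆ Ω, let A = Ω \ (0,1), and let T be the topology on Ω consisting of all unions of members of the basis B = {(s,t) : 0 < s < t < 1} ∪ {(s,1) ∪ {t} : 0 < s < 1 and t ∈ A}. Then T is a first countable, locally compact topology on Ω which is neither Hausdorff nor regular; and if the set A is infinite, then for every t ∈ A the singleton {t} belongs to the k-extension k_ex T but not to the Kelleyfication k_elt T, so that k_elt T ≠ k_ex T. -/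
open Set Filter Topology

universe u v

namespace ST18

section Wrappers
variable {X : Type u} (T : TopologicalSpace X)

lemma memNhdsIff {s : Set X} {x : X} :
    s ∈ @nhds X T x ↔ ∃ t ⊆ s, T.IsOpen t ∧ x ∈ t := by
  letI := T; exact mem_nhds_iff

lemma openMemNhds {s : Set X} {x : X} (hs : T.IsOpen s) (hx : x ∈ s) : s ∈ @nhds X T x := by
  letI := T; exact IsOpen.mem_nhds hs hx

lemma openEmpty : T.IsOpen (∅ : Set X) := by
  letI := T; exact isOpen_empty

lemma compactOfCover {s : Set X}
    (h : ∀ {ι : Type u} (U : ι → Set X), (∀ i, T.IsOpen (U i)) → s ⊆ ⋃ i, U i →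
      ∃ t : Finset ι, s ⊆ ⋃ i ∈ t, U i) : @IsCompact X T s := by
  letI := T; exact isCompact_of_finite_subcover h

lemma compactElim {s : Set X} (hs : @IsCompact X T s) {ι : Type v} (U : ι → Set X)
    (hUo : ∀ i, T.IsOpen (U i)) (hsU : s ⊆ ⋃ i, U i) : ∃ t : Finset ι, s ⊆ ⋃ i ∈ t, U i := by
  letI := T; exact hs.elim_finite_subcover U hUo hsU

lemma nhdsSetSingleton (x : X) : @nhdsSet X T {x} = @nhds X T x := by
  letI := T; exact nhdsSet_singleton

end Wrappers

def ioo (Ω : Set ℝ) (s t : ℝ) : Set ↥Ω := {x : ↥Ω | s < (x : ℝ) ∧ (x : ℝ) < t}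

def tl (Ω : Set ℝ) (s : ℝ) (a : ↥Ω) : Set ↥Ω := {x : ↥Ω | s < (x : ℝ) ∧ (x : ℝ) < 1} ∪ {a}

section Basis

variable {Ω : Set ℝ} {B : Set (Set ↥Ω)} {T : TopologicalSpace ↥Ω}

lemma openIffB (hT : ∀ U : Set ↥Ω, T.IsOpen U ↔ ∃ 𝒜 ⊆ B, U = ⋃₀ 𝒜) {U : Set ↥Ω} :
    T.IsOpen U ↔ ∀ x ∈ U, ∃ b ∈ B, x ∈ b ∧ b ⊆ U := by
  constructor
  · intro hU x hx
    obtain ⟨𝒜, h𝒜B, rfl⟩ := (hT U).1 hU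
    obtain ⟨b, hb𝒜, hxb⟩ := hx
    exact ⟨b, h𝒜B hb𝒜, hxb, subset_sUnion_of_mem hb𝒜⟩
  · intro h
    refine (hT U).2 ⟨{b ∈ B | b ⊆ U}, fun b hb => hb.1, ?_⟩
    apply Set.Subset.antisymm
    · intro x hx
      obtain ⟨b, hbB, hxb, hbU⟩ := h x hx
      exact ⟨b, ⟨hbB, hbU⟩, hxb⟩
    · exact sUnion_subset fun b hb => hb.2

variable (hΩ : Set.Icc (0 : ℝ) 1 ⊆ Ω)
  (hB : B =
      {S | ∃ s t : ℝ, 0 < s ∧ s < t ∧ t < 1 ∧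
        S = {x : ↥Ω | s < (x : ℝ) ∧ (x : ℝ) < t}} ∪
      {S | ∃ (s : ℝ) (a : ↥Ω), 0 < s ∧ s < 1 ∧ (a : ℝ) ∈ Ω \ Set.Ioo 0 1 ∧
        S = {x : ↥Ω | s < (x : ℝ) ∧ (x : ℝ) < 1} ∪ {a}})
  (hT : ∀ U : Set ↥Ω, T.IsOpen U ↔ ∃ 𝒜 ⊆ B, U = ⋃₀ 𝒜)

include hB hT

lemma openIoo {s t : ℝ} (hs : 0 < s) (ht : t ≤ 1) : T.IsOpen (ioo Ω s t) := by
  rw [openIffB hT]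
  intro x hx
  obtain ⟨hsx, hxt⟩ := hx
  rcases lt_or_eq_of_le ht with ht1 | rfl
  · refine ⟨ioo Ω s t, ?_, ⟨hsx, hxt⟩, subset_rfl⟩
    rw [hB]
    exact Or.inl ⟨s, t, hs, lt_trans hsx hxt, ht1, rfl⟩
  · refine ⟨ioo Ω s (((x : ℝ) + 1) / 2), ?_, ⟨hsx, by linarith⟩, fun y hy => ⟨hy.1, by linarith [hy.2]⟩⟩
    rw [hB]
    exact Or.inl ⟨s, ((x : ℝ) + 1) / 2, hs, by linarith, by linarith, rfl⟩

lemma openTl {s : ℝ} {a : ↥Ω} (hs0 : 0 < s) (hs1 : s < 1)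
    (ha : (a : ℝ) ∈ Ω \ Set.Ioo 0 1) : T.IsOpen (tl Ω s a) := by
  refine (hT _).2 ⟨{tl Ω s a}, ?_, (Set.sUnion_singleton _).symm⟩
  intro b hb
  rw [Set.mem_singleton_iff] at hb
  subst hb
  rw [hB]
  exact Or.inr ⟨s, a, hs0, hs1, ha, rfl⟩

lemma openOfNhds {U : Set ↥Ω} (h : ∀ x ∈ U, ∃ V, T.IsOpen V ∧ x ∈ V ∧ V ⊆ U) :
    T.IsOpen U := by
  rw [openIffB hT]
  intro x hx
  obtain ⟨V, hVo, hxV, hVU⟩ := h x hx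
  obtain ⟨b, hbB, hxb, hbV⟩ := (openIffB hT).1 hVo x hxV
  exact ⟨b, hbB, hxb, hbV.trans hVU⟩

lemma nhdsMid {U : Set ↥Ω} {x : ↥Ω} (hU : T.IsOpen U) (hx : x ∈ U)
    (hx01 : (x : ℝ) ∈ Set.Ioo 0 1) :
    ∃ s t : ℝ, 0 < s ∧ s < (x : ℝ) ∧ (x : ℝ) < t ∧ t < 1 ∧ ioo Ω s t ⊆ U := by
  obtain ⟨b, hbB, hxb, hbU⟩ := (openIffB hT).1 hU x hx
  rw [hB] at hbB
  rcases hbB with ⟨s, t, hs, hst, ht, rfl⟩ | ⟨s, a, hs0, hs1, haA, rfl⟩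
  · exact ⟨s, t, hs, hxb.1, hxb.2, ht, hbU⟩
  · rcases hxb with ⟨h1, h2⟩ | hxa
    · refine ⟨s, ((x : ℝ) + 1) / 2, hs0, h1, by linarith, by linarith, ?_⟩
      intro y hy
      exact hbU (Or.inl ⟨hy.1, by linarith [hy.2]⟩)
    · rw [Set.mem_singleton_iff] at hxa
      exact absurd hx01 (by rw [hxa]; exact haA.2)

lemma nhdsA {U : Set ↥Ω} {a : ↥Ω} (hU : T.IsOpen U) (ha : a ∈ U)
    (haA : (a : ℝ) ∈ Ω \ Set.Ioo 0 1) :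
    ∃ s : ℝ, 0 < s ∧ s < 1 ∧ tl Ω s a ⊆ U := by
  obtain ⟨b, hbB, hxb, hbU⟩ := (openIffB hT).1 hU a ha
  rw [hB] at hbB
  rcases hbB with ⟨s, t, hs, hst, ht, rfl⟩ | ⟨s, a', hs0, hs1, _, rfl⟩
  · exact absurd haA.2 (not_not_intro ⟨lt_trans hs hxb.1, lt_trans hxb.2 ht⟩)
  · rcases hxb with ⟨h1, h2⟩ | hxa
    · exact absurd haA.2 (not_not_intro ⟨lt_trans hs0 h1, h2⟩)
    · rw [Set.mem_singleton_iff] at hxa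
      subst hxa
      exact ⟨s, hs0, hs1, hbU⟩

include hΩ

lemma compactIcc {c d : ℝ} (hc : 0 < c) (hd : d < 1) :
    @IsCompact ↥Ω T {x : ↥Ω | c ≤ (x : ℝ) ∧ (x : ℝ) ≤ d} := by
  apply compactOfCover
  intro ι U hUo hcov
  set W : ι → Set ℝ := fun i =>
    {y : ℝ | ∃ h : y ∈ Ω, y ∈ Set.Ioo (0 : ℝ) 1 ∧ (⟨y, h⟩ : ↥Ω) ∈ U i} with hW
  have hWo : ∀ i, IsOpen (W i) := by
    intro i
    rw [isOpen_iff_mem_nhds]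
    rintro y ⟨hyΩ, hy01, hyU⟩
    obtain ⟨s, t, hs, hsy, hyt, ht, hsub⟩ := nhdsMid hB hT (hUo i) hyU hy01
    filter_upwards [Ioo_mem_nhds hsy hyt] with z hz
    have hz01 : z ∈ Set.Ioo (0 : ℝ) 1 := ⟨lt_trans hs hz.1, lt_trans hz.2 ht⟩
    exact ⟨hΩ ⟨hz01.1.le, hz01.2.le⟩, hz01, hsub ⟨hz.1, hz.2⟩⟩
  have hIcc : Set.Icc c d ⊆ ⋃ i, W i := by
    intro y hy
    have hy01 : y ∈ Set.Ioo (0 : ℝ) 1 := ⟨lt_of_lt_of_le hc hy.1, lt_of_le_of_lt hy.2 hd⟩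
    have hyΩ : y ∈ Ω := hΩ ⟨hy01.1.le, hy01.2.le⟩
    obtain ⟨i, hi⟩ := mem_iUnion.1 (hcov (show (⟨y, hyΩ⟩ : ↥Ω) ∈ _ from ⟨hy.1, hy.2⟩))
    exact mem_iUnion.2 ⟨i, hyΩ, hy01, hi⟩
  obtain ⟨t, ht⟩ := isCompact_Icc.elim_finite_subcover W hWo hIcc
  refine ⟨t, fun x hx => ?_⟩
  obtain ⟨i, hit, hyΩ', hy01, hyU⟩ := mem_iUnion₂.1 (ht ⟨hx.1, hx.2⟩)
  have hxx : (⟨(x : ℝ), hyΩ'⟩ : ↥Ω) = x := Subtype.ext rfl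
  exact mem_iUnion₂.2 ⟨i, hit, hxx ▸ hyU⟩

lemma compactTail {c : ℝ} {a : ↥Ω} (hc0 : 0 < c) (hc1 : c < 1)
    (haA : (a : ℝ) ∈ Ω \ Set.Ioo 0 1) :
    @IsCompact ↥Ω T ({x : ↥Ω | c ≤ (x : ℝ) ∧ (x : ℝ) < 1} ∪ {a}) := by
  classical
  apply compactOfCover
  intro ι U hUo hcov
  obtain ⟨i₀, hi₀⟩ := mem_iUnion.1 (hcov (Or.inr rfl))
  obtain ⟨r, hr0, hr1, hsub⟩ := nhdsA hB hT (hUo i₀) hi₀ haA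
  obtain ⟨t, ht⟩ := compactElim T (compactIcc hΩ hB hT hc0 hr1) U hUo
    (fun x hx => hcov (Or.inl ⟨hx.1, lt_of_le_of_lt hx.2 hr1⟩))
  refine ⟨insert i₀ t, ?_⟩
  rintro x (hx | hx)
  · by_cases hxr : (x : ℝ) ≤ r
    · obtain ⟨i, hit, hxU⟩ := mem_iUnion₂.1 (ht ⟨hx.1, hxr⟩)
      exact mem_iUnion₂.2 ⟨i, Finset.mem_insert_of_mem hit, hxU⟩
    · exact mem_iUnion₂.2 ⟨i₀, Finset.mem_insert_self _ _,
        hsub (Or.inl ⟨lt_of_not_ge hxr, hx.2⟩)⟩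
  · rw [Set.mem_singleton_iff] at hx
    subst hx
    exact mem_iUnion₂.2 ⟨i₀, Finset.mem_insert_self _ _, hsub (Or.inr rfl)⟩

lemma existsNotMem (hinf : (Ω \ Set.Ioo 0 1).Infinite) {K : Set ↥Ω}
    (hK : @IsCompact ↥Ω T K) :
    ∃ b : ↥Ω, (b : ℝ) ∈ Ω \ Set.Ioo 0 1 ∧ b ∉ K := by
  by_contra h
  push_neg at h
  set U : ({b : ↥Ω // (b : ℝ) ∈ Ω \ Set.Ioo 0 1} ⊕ ℕ) → Set ↥Ω :=
    Sum.elim (fun b => tl Ω (1/2) b.1)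
      (fun n => ioo Ω (1/((n : ℝ)+2)) (1 - 1/((n : ℝ)+2))) with hU
  have hUo : ∀ i, T.IsOpen (U i) := by
    rintro (b | n)
    · exact openTl hB hT one_half_pos one_half_lt_one b.2
    · refine openIoo hB hT (by positivity) ?_
      have : (0:ℝ) < 1/((n : ℝ)+2) := by positivity
      linarith
  have hcov : K ⊆ ⋃ i, U i := by
    intro x hx
    by_cases hx01 : (x : ℝ) ∈ Set.Ioo 0 1
    · obtain ⟨n, hn⟩ := exists_nat_one_div_lt
        (show (0:ℝ) < min (x : ℝ) (1 - (x : ℝ)) from lt_min hx01.1 (by linarith [hx01.2]))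
      have h2 : 1/((n : ℝ)+2) ≤ 1/((n : ℝ)+1) := by
        apply one_div_le_one_div_of_le <;> [positivity; linarith]
      have hmin1 : (1:ℝ)/((n : ℝ)+1) < (x : ℝ) := lt_of_lt_of_le hn (min_le_left _ _)
      have hmin2 : (1:ℝ)/((n : ℝ)+1) < 1 - (x : ℝ) := lt_of_lt_of_le hn (min_le_right _ _)
      exact mem_iUnion.2 ⟨Sum.inr n, by linarith, by linarith⟩
    · exact mem_iUnion.2 ⟨Sum.inl ⟨x, ⟨x.2, hx01⟩⟩, Or.inr rfl⟩
  obtain ⟨t, ht⟩ := compactElim T hK U hUo hcov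
  have hSinf : {x : ↥Ω | (x : ℝ) ∈ Ω \ Set.Ioo 0 1}.Infinite := by
    apply Set.Infinite.of_image Subtype.val
    apply hinf.mono
    intro y hy
    exact ⟨⟨y, hy.1⟩, hy, rfl⟩
  have p1Ω : (1:ℝ) ∈ Ω := hΩ ⟨zero_le_one, le_refl 1⟩
  have hfin : {x : ↥Ω | (x : ℝ) ∈ Ω \ Set.Ioo 0 1}.Finite := by
    apply Set.Finite.subset (t.finite_toSet.image
      (Sum.elim (fun b => b.1) (fun _ => (⟨1, p1Ω⟩ : ↥Ω))))
    intro x hx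
    obtain ⟨i, hit, hxU⟩ := mem_iUnion₂.1 (ht (h x hx))
    rcases i with b | n
    · rcases hxU with h' | h'
      · exact absurd (⟨lt_trans one_half_pos h'.1, h'.2⟩ : (x:ℝ) ∈ Set.Ioo 0 1) hx.2
      · rw [Set.mem_singleton_iff] at h'
        exact ⟨Sum.inl b, Finset.mem_coe.mpr hit, h'.symm⟩
    · have hpos : (0:ℝ) < 1/((n : ℝ)+2) := by positivity
      exact absurd (⟨lt_trans hpos hxU.1, by linarith [hxU.2]⟩ : (x:ℝ) ∈ Set.Ioo 0 1) hx.2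
  exact hSinf hfin

end Basis
end ST18

open ST18

/-- With `[0,1] ⊆ Ω ⊆ ℝ`, `A = Ω \ (0,1)`, and `T` the topology on `Ω` whose
open sets are exactly the unions of members of the basis
`B = {(s,t) : 0 < s < t < 1} ∪ {(s,1) ∪ {a} : 0 < s < 1, a ∈ A}`, the topology `T` is first
countable and locally compact but neither Hausdorff nor regular; and if `A` is infinite then
for every `a ∈ A` the singleton `{a}` is open in the k-extension of `T` but not in the
Kelleyfication of `T`, so that these two topologies differ. -/
theorem example_locally_compact_not_kSpace (Ω : Set ℝ) (hΩ : Set.Icc (0 : ℝ) 1 ⊆ Ω)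
    (B : Set (Set ↥Ω))
    (hB : B =
      {S | ∃ s t : ℝ, 0 < s ∧ s < t ∧ t < 1 ∧
        S = {x : ↥Ω | s < (x : ℝ) ∧ (x : ℝ) < t}} ∪
      {S | ∃ (s : ℝ) (a : ↥Ω), 0 < s ∧ s < 1 ∧ (a : ℝ) ∈ Ω \ Set.Ioo 0 1 ∧
        S = {x : ↥Ω | s < (x : ℝ) ∧ (x : ℝ) < 1} ∪ {a}})
    (T : TopologicalSpace ↥Ω)
    (hT : ∀ U : Set ↥Ω, T.IsOpen U ↔ ∃ 𝒜 ⊆ B, U = ⋃₀ 𝒜) :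
    @FirstCountableTopology ↥Ω T ∧ LocCompact T ∧
    ¬ @T2Space ↥Ω T ∧ ¬ @RegularSpace ↥Ω T ∧
    ((Ω \ Set.Ioo 0 1).Infinite →
      (∀ a : ↥Ω, (a : ℝ) ∈ Ω \ Set.Ioo 0 1 →
        (KelleyEx T).IsOpen {a} ∧ ¬ (Kelley T).IsOpen {a}) ∧
      Kelley T ≠ KelleyEx T) := by
  have h0Ω : (0 : ℝ) ∈ Ω := hΩ ⟨le_refl 0, zero_le_one⟩
  have h1Ω : (1 : ℝ) ∈ Ω := hΩ ⟨zero_le_one, le_refl 1⟩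
  have hp0A : ((⟨0, h0Ω⟩ : ↥Ω) : ℝ) ∈ Ω \ Set.Ioo 0 1 :=
    ⟨h0Ω, fun h => lt_irrefl (0 : ℝ) h.1⟩
  have hp1A : ((⟨1, h1Ω⟩ : ↥Ω) : ℝ) ∈ Ω \ Set.Ioo 0 1 :=
    ⟨h1Ω, fun h => lt_irrefl (1 : ℝ) h.2⟩
  refine ⟨?_, ?_, ?_, ?_, ?_⟩
  -- First countable
  · refine ⟨fun a => ?_⟩
    by_cases ha : (a : ℝ) ∈ Set.Ioo 0 1
    · obtain ⟨ha0, ha1⟩ := ha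
      set S : ℕ → Set ↥Ω := fun n =>
        ioo Ω (max ((a : ℝ) - 1/(n+1)) ((a : ℝ)/2))
          (min ((a : ℝ) + 1/(n+1)) (((a : ℝ)+1)/2)) with hS
      have hnpos : ∀ n : ℕ, (0:ℝ) < 1/((n:ℝ)+1) := fun n => by positivity
      have hSo : ∀ n, T.IsOpen (S n) := fun n =>
        openIoo hB hT (lt_of_lt_of_le (by linarith) (le_max_right _ _))
          (le_trans (min_le_right _ _) (by linarith))
      have hSa : ∀ n, a ∈ S n := fun n =>
        ⟨max_lt (by linarith [hnpos n]) (by linarith), lt_min (by linarith [hnpos n]) (by linarith)⟩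
      have hbasis : (@nhds ↥Ω T a).HasBasis (fun _ : ℕ => True) S := by
        constructor
        intro U
        constructor
        · intro hU
          obtain ⟨O, hOU, hOo, haO⟩ := (memNhdsIff T).1 hU
          obtain ⟨s, t, hs, hsa, hat, ht, hsub⟩ := nhdsMid hB hT hOo haO ⟨ha0, ha1⟩
          obtain ⟨n, hn⟩ := exists_nat_one_div_lt
            (show (0:ℝ) < min ((a:ℝ) - s) (t - (a:ℝ)) from lt_min (by linarith) (by linarith))
          have h1 : 1/((n:ℝ)+1) < (a:ℝ) - s := lt_of_lt_of_le hn (min_le_left _ _)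
          have h2 : 1/((n:ℝ)+1) < t - (a:ℝ) := lt_of_lt_of_le hn (min_le_right _ _)
          refine ⟨n, trivial, fun x hx => hOU (hsub ⟨?_, ?_⟩)⟩
          · exact lt_of_le_of_lt (le_trans (by linarith : s ≤ (a:ℝ) - 1/((n:ℝ)+1))
              (le_max_left _ _)) hx.1
          · exact lt_of_lt_of_le hx.2 (le_trans (min_le_left _ _) (by linarith))
        · rintro ⟨n, -, hsub⟩
          exact Filter.mem_of_superset (openMemNhds T (hSo n) (hSa n)) hsub
      exact hbasis.isCountablyGenerated
    · have haA : (a : ℝ) ∈ Ω \ Set.Ioo 0 1 := ⟨a.2, ha⟩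
      set S : ℕ → Set ↥Ω := fun n => tl Ω (1 - 1/((n:ℝ)+2)) a with hS
      have hnpos : ∀ n : ℕ, (0:ℝ) < 1/((n:ℝ)+2) := fun n => by positivity
      have hnhalf : ∀ n : ℕ, 1/((n:ℝ)+2) ≤ 1/2 := fun n =>
        one_div_le_one_div_of_le (by norm_num) (by linarith [Nat.cast_nonneg (α := ℝ) n])
      have hSo : ∀ n, T.IsOpen (S n) := fun n =>
        openTl hB hT (by linarith [hnhalf n]) (by linarith [hnpos n]) haA
      have hSa : ∀ n, a ∈ S n := fun n => Or.inr rfl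
      have hbasis : (@nhds ↥Ω T a).HasBasis (fun _ : ℕ => True) S := by
        constructor
        intro U
        constructor
        · intro hU
          obtain ⟨O, hOU, hOo, haO⟩ := (memNhdsIff T).1 hU
          obtain ⟨s, hs0, hs1, hsub⟩ := nhdsA hB hT hOo haO haA
          obtain ⟨n, hn⟩ := exists_nat_one_div_lt (show (0:ℝ) < 1 - s by linarith)
          have h2 : 1/((n:ℝ)+2) ≤ 1/((n:ℝ)+1) :=
            one_div_le_one_div_of_le (by positivity) (by linarith)
          refine ⟨n, trivial, fun x hx => hOU (hsub ?_)⟩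
          rcases hx with ⟨hx1, hx2⟩ | hx
          · exact Or.inl ⟨by linarith, hx2⟩
          · exact Or.inr hx
        · rintro ⟨n, -, hsub⟩
          exact Filter.mem_of_superset (openMemNhds T (hSo n) (hSa n)) hsub
      exact hbasis.isCountablyGenerated
  -- Locally compact
  · intro y V hV hyV
    by_cases hy : (y : ℝ) ∈ Set.Ioo 0 1
    · obtain ⟨s, t, hs, hsy, hyt, ht, hsub⟩ := nhdsMid hB hT hV hyV hy
      refine ⟨{x : ↥Ω | (s + (y:ℝ))/2 ≤ (x:ℝ) ∧ (x:ℝ) ≤ ((y:ℝ) + t)/2},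
        ioo Ω ((s + (y:ℝ))/2) (((y:ℝ) + t)/2),
        ⟨by linarith, by linarith⟩,
        openIoo hB hT (by linarith) (by linarith),
        fun x hx => ⟨hx.1.le, hx.2.le⟩,
        fun x hx => hsub ⟨by linarith [hx.1], by linarith [hx.2]⟩,
        compactIcc hΩ hB hT (by linarith) (by linarith)⟩
    · have hyA : (y : ℝ) ∈ Ω \ Set.Ioo 0 1 := ⟨y.2, hy⟩
      obtain ⟨s, hs0, hs1, hsub⟩ := nhdsA hB hT hV hyV hyA
      refine ⟨{x : ↥Ω | (s+1)/2 ≤ (x:ℝ) ∧ (x:ℝ) < 1} ∪ {y}, tl Ω ((s+1)/2) y,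
        Or.inr rfl, openTl hB hT (by linarith) (by linarith) hyA, ?_, ?_,
        compactTail hΩ hB hT (by linarith) (by linarith) hyA⟩
      · rintro x (hx | hx)
        · exact Or.inl ⟨hx.1.le, hx.2⟩
        · exact Or.inr hx
      · rintro x (hx | hx)
        · exact hsub (Or.inl ⟨by linarith [hx.1], hx.2⟩)
        · exact hsub (Or.inr hx)
  -- not T2
  · intro h2
    have hne : (⟨0, h0Ω⟩ : ↥Ω) ≠ ⟨1, h1Ω⟩ := fun h =>
      zero_ne_one (congrArg Subtype.val h)
    obtain ⟨U, V, hUo, hVo, hU0, hV1, hdUV⟩ := h2.t2 hne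
    obtain ⟨s, hs0, hs1, hsubU⟩ := nhdsA hB hT hUo hU0 hp0A
    obtain ⟨s', hs'0, hs'1, hsubV⟩ := nhdsA hB hT hVo hV1 hp1A
    have hm1 : max s s' < 1 := max_lt hs1 hs'1
    have hm0 : (0:ℝ) < max s s' := lt_of_lt_of_le hs0 (le_max_left _ _)
    have hzΩ : (max s s' + 1)/2 ∈ Ω := hΩ ⟨by linarith, by linarith⟩
    have hzU : (⟨(max s s' + 1)/2, hzΩ⟩ : ↥Ω) ∈ U :=
      hsubU (Or.inl ⟨by linarith [le_max_left s s'], by linarith⟩)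
    have hzV : (⟨(max s s' + 1)/2, hzΩ⟩ : ↥Ω) ∈ V :=
      hsubV (Or.inl ⟨by linarith [le_max_right s s'], by linarith⟩)
    exact Set.disjoint_left.mp hdUV hzU hzV
  -- not regular
  · intro hreg
    have hcl : @IsClosed ↥Ω T {(⟨1, h1Ω⟩ : ↥Ω)} := by
      refine ⟨?_⟩
      apply openOfNhds hB hT
      intro x hx
      by_cases hx01 : (x : ℝ) ∈ Set.Ioo 0 1
      · refine ⟨ioo Ω ((x:ℝ)/2) (((x:ℝ)+1)/2),
          openIoo hB hT (by linarith [hx01.1]) (by linarith [hx01.2]),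
          ⟨by linarith [hx01.1], by linarith [hx01.2]⟩, ?_⟩
        intro y hy h1
        rw [Set.mem_singleton_iff] at h1
        have : (y : ℝ) = 1 := congrArg Subtype.val h1
        have := hy.2
        linarith [hx01.2]
      · refine ⟨tl Ω (1/2) x, openTl hB hT one_half_pos one_half_lt_one ⟨x.2, hx01⟩,
          Or.inr rfl, ?_⟩
        rintro y (hy | hy) h1
        · rw [Set.mem_singleton_iff] at h1
          have : (y : ℝ) = 1 := congrArg Subtype.val h1
          linarith [hy.2]
        · rw [Set.mem_singleton_iff] at hy
          rw [Set.mem_singleton_iff] at h1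
          exact hx (hy.symm ▸ h1 : x ∈ _)
    have hdis := hreg.regular (s := {(⟨1, h1Ω⟩ : ↥Ω)}) (a := (⟨0, h0Ω⟩ : ↥Ω)) hcl
      (by intro h; rw [Set.mem_singleton_iff] at h; exact zero_ne_one (congrArg Subtype.val h))
    rw [nhdsSetSingleton T] at hdis
    obtain ⟨U, hU, V, hV, hdUV⟩ := Filter.disjoint_iff.mp hdis
    obtain ⟨OU, hOUU, hOUo, h1OU⟩ := (memNhdsIff T).1 hU
    obtain ⟨OV, hOVV, hOVo, h0OV⟩ := (memNhdsIff T).1 hV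
    obtain ⟨s, hs0, hs1, hsubU⟩ := nhdsA hB hT hOUo h1OU hp1A
    obtain ⟨s', hs'0, hs'1, hsubV⟩ := nhdsA hB hT hOVo h0OV hp0A
    have hm1 : max s s' < 1 := max_lt hs1 hs'1
    have hm0 : (0:ℝ) < max s s' := lt_of_lt_of_le hs0 (le_max_left _ _)
    have hzΩ : (max s s' + 1)/2 ∈ Ω := hΩ ⟨by linarith, by linarith⟩
    have hzU : (⟨(max s s' + 1)/2, hzΩ⟩ : ↥Ω) ∈ U :=
      hOUU (hsubU (Or.inl ⟨by linarith [le_max_left s s'], by linarith⟩))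
    have hzV : (⟨(max s s' + 1)/2, hzΩ⟩ : ↥Ω) ∈ V :=
      hOVV (hsubV (Or.inl ⟨by linarith [le_max_right s s'], by linarith⟩))
    exact Set.disjoint_left.mp hdUV hzU hzV
  -- Kelley part
  · intro hinf
    have main : ∀ a : ↥Ω, (a : ℝ) ∈ Ω \ Set.Ioo 0 1 →
        (KelleyEx T).IsOpen {a} ∧ ¬ (Kelley T).IsOpen {a} := by
      intro a haA
      constructor
      · intro K hK hKc
        obtain ⟨b, hbA, hbK⟩ := existsNotMem hΩ hB hT hinf hK
        obtain ⟨s, hs0, hs1, hsub⟩ := nhdsA hB hT hKc.isOpen_compl hbK hbA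
        by_cases haK : a ∈ K
        · refine ⟨tl Ω s a, openTl hB hT hs0 hs1 haA, ?_⟩
          ext x
          constructor
          · rintro ⟨hx1, hxK⟩
            rw [Set.mem_singleton_iff] at hx1
            subst hx1
            exact ⟨Or.inr rfl, hxK⟩
          · rintro ⟨hxtl, hxK⟩
            rcases hxtl with h' | h'
            · exact absurd hxK (hsub (Or.inl h'))
            · exact ⟨h', hxK⟩
        · refine ⟨∅, openEmpty T, ?_⟩
          ext x
          constructor
          · rintro ⟨hx1, hxK⟩
            rw [Set.mem_singleton_iff] at hx1
            subst hx1
            exact absurd hxK haK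
          · rintro ⟨hx, -⟩
            exact absurd hx (Set.notMem_empty x)
      · intro hopen
        have hK := compactTail hΩ hB hT (c := 1/2) (a := a) one_half_pos one_half_lt_one haA
        obtain ⟨V, hVo, hVeq⟩ := hopen _ hK
        have haV : a ∈ V := by
          have h' : a ∈ ({a} : Set ↥Ω) ∩ ({x : ↥Ω | 1/2 ≤ (x:ℝ) ∧ (x:ℝ) < 1} ∪ {a}) :=
            ⟨rfl, Or.inr rfl⟩
          rw [hVeq] at h'
          exact h'.1
        obtain ⟨s, hs0, hs1, hsub⟩ := nhdsA hB hT hVo haV haA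
        have hm1 : max s (1/2) < 1 := max_lt hs1 one_half_lt_one
        have hm0 : (0:ℝ) < max s (1/2) := lt_of_lt_of_le one_half_pos (le_max_right _ _)
        have hzΩ : (max s (1/2) + 1)/2 ∈ Ω := hΩ ⟨by linarith, by linarith⟩
        have h1 : (⟨(max s (1/2) + 1)/2, hzΩ⟩ : ↥Ω) ∈ V ∩
            ({x : ↥Ω | 1/2 ≤ (x:ℝ) ∧ (x:ℝ) < 1} ∪ {a}) :=
          ⟨hsub (Or.inl ⟨by linarith [le_max_left s (1/2:ℝ)], by linarith⟩),
            Or.inl ⟨by linarith [le_max_right s (1/2:ℝ)], by linarith⟩⟩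
        rw [← hVeq] at h1
        have h2 : (⟨(max s (1/2) + 1)/2, hzΩ⟩ : ↥Ω) = a := h1.1
        have h3 : (a : ℝ) = (max s (1/2) + 1)/2 := (congrArg Subtype.val h2).symm
        exact haA.2 (by rw [h3]; exact ⟨by linarith, by linarith⟩)
    refine ⟨main, ?_⟩
    intro heq
    have h := main ⟨1, h1Ω⟩ hp1A
    have h' : (Kelley T).IsOpen {(⟨1, h1Ω⟩ : ↥Ω)} := by rw [heq]; exact h.1
    exact h.2 h'
end
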